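/- Let R be a commutative noetherian ring, S a ring which is an R-algebra, I and J ideals of R, and M an S-module. Then Ass(M) ∩ W(I,J) = Ass(Γ_{I,J}(M)). -/

import Mathlib

/-- Annihilator in `R` of an `S`-submodule, `R` acting through `algebraMap R S`. -/
def annRS (R : Type*) {S M : Type*} [CommRing R] [Ring S] [Algebra R S]
    [AddCommGroup M] [Module S M] (N : Submodule S M) : Ideal R where
  carrier := {r : R | ∀ x ∈ N, algebraMap R S r • x = 0}
  zero_mem' := by intro x _; simp
  add_mem' := by
    intro a b ha hb x hx
    rw [map_add, add_smul, ha x hx, hb x hx, add_zero]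
  smul_mem' := by
    intro c a ha x hx
    rw [smul_eq_mul, map_mul, mul_smul, ha x hx, smul_zero]

/-- An `R`-elementary object: nonzero, finitely generated, and the `R`-annihilator of
every nonzero subobject equals a fixed prime ideal `p` of `R`. -/
def IsRElem (R : Type*) {S M : Type*} [CommRing R] [Ring S] [Algebra R S]
    [AddCommGroup M] [Module S M] (L : Submodule S M) : Prop :=
  L ≠ ⊥ ∧ L.FG ∧ ∃ p : Ideal R, p.IsPrime ∧
    ∀ L' : Submodule S M, L' ≤ L → L' ≠ ⊥ → annRS R L' = p

/-- Associated primes of the subobject `N`. -/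
def RAssOf (R : Type*) {S M : Type*} [CommRing R] [Ring S] [Algebra R S]
    [AddCommGroup M] [Module S M] (N : Submodule S M) : Set (Ideal R) :=
  {p | ∃ L : Submodule S M, L ≤ N ∧ IsRElem R L ∧ annRS R L = p}

/-- `Γ_{I,J}` of a module. -/
def gammaIJ (R S : Type*) [CommRing R] [Ring S] [Algebra R S] (I J : Ideal R)
    (M : Type*) [AddCommGroup M] [Module S M] : Submodule S M :=
  sSup {N : Submodule S M | N.FG ∧ ∃ n, 1 ≤ n ∧ I ^ n ≤ annRS R N ⊔ J}

/-- `W(I,J)`, the nonclosed support attached to the pair of ideals `(I,J)`. -/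
def WIJ {R : Type*} [CommRing R] (I J : Ideal R) : Set (Ideal R) :=
  {p | p.IsPrime ∧ ∃ n, 1 ≤ n ∧ I ^ n ≤ p ⊔ J}

section Aux

variable {R S M : Type*} [CommRing R] [Ring S] [Algebra R S]
  [AddCommGroup M] [Module S M]

/-- The set of elements killed by `algebraMap R S r` is an `S`-submodule. -/
def kerRS (R : Type*) {S M : Type*} [CommRing R] [Ring S] [Algebra R S]
    [AddCommGroup M] [Module S M] (r : R) : Submodule S M where
  carrier := {x | algebraMap R S r • x = 0}
  zero_mem' := by simp
  add_mem' := by intro a b ha hb; simp only [Set.mem_setOf_eq] at *; rw [smul_add, ha, hb, add_zero]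
  smul_mem' := by
    intro s x hx
    simp only [Set.mem_setOf_eq] at *
    rw [← mul_smul, Algebra.commutes r s, mul_smul, hx, smul_zero]

lemma annRS_antitone {N₁ N₂ : Submodule S M} (h : N₁ ≤ N₂) :
    annRS R N₂ ≤ annRS R N₁ := fun _ hr x hx => hr x (h hx)

lemma inf_annRS_le_annRS_sup (N₁ N₂ : Submodule S M) :
    annRS R N₁ ⊓ annRS R N₂ ≤ annRS R (N₁ ⊔ N₂) := by
  rintro r ⟨h1, h2⟩
  have hle : N₁ ⊔ N₂ ≤ kerRS R r :=
    sup_le (fun x hx => h1 x hx) (fun x hx => h2 x hx)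
  exact fun x hx => hle hx

lemma annRS_bot : annRS R (⊥ : Submodule S M) = ⊤ := by
  ext r
  simp only [Submodule.mem_top, iff_true]
  intro x hx
  rw [Submodule.mem_bot] at hx
  rw [hx, smul_zero]

set_option maxHeartbeats 1000000 in
lemma finset_sup_bound (I J : Ideal R) (t : Finset (Submodule S M))
    (ht : ∀ N ∈ t, ∃ n, 1 ≤ n ∧ I ^ n ≤ annRS R N ⊔ J) :
    ∃ n, 1 ≤ n ∧ I ^ n ≤ annRS R (t.sup id) ⊔ J := by
  classical
  induction t using Finset.induction_on with
  | empty =>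
      refine ⟨1, le_refl 1, ?_⟩
      simp [annRS_bot]
  | @insert N t hN ih =>
      obtain ⟨n₁, hn₁, h₁⟩ := ht N (Finset.mem_insert_self N t)
      obtain ⟨n₂, hn₂, h₂⟩ := ih (fun N' hN' => ht N' (Finset.mem_insert_of_mem hN'))
      refine ⟨n₁ + n₂, le_trans hn₁ (Nat.le_add_right _ _), ?_⟩
      rw [Finset.sup_insert, pow_add]
      calc I ^ n₁ * I ^ n₂ ≤ (annRS R N ⊔ J) * (annRS R (t.sup id) ⊔ J) :=
            Ideal.mul_mono h₁ h₂
        _ ≤ annRS R (id N ⊔ t.sup id) ⊔ J := by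
            rw [Ideal.mul_le]
            intro r hr s hs
            rw [Submodule.mem_sup] at hr hs ⊢
            obtain ⟨a, ha, j, hj, rfl⟩ := hr
            obtain ⟨b, hb, j', hj', rfl⟩ := hs
            refine ⟨a * b, ?_, a * j' + j * b + j * j', ?_, by ring⟩
            · exact inf_annRS_le_annRS_sup N (t.sup id)
                ⟨Ideal.mul_le_left (Ideal.mul_mem_mul ha hb),
                 Ideal.mul_le_right (Ideal.mul_mem_mul ha hb)⟩
            · exact J.add_mem (J.add_mem (J.mul_mem_left a hj') (J.mul_mem_right b hj))
                (J.mul_mem_left j hj')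

end Aux

/-- `Ass(M) ∩ W(I,J) = Ass(Γ_{I,J}(M))`. -/
theorem rAss_inter_WIJ_eq_rAss_gammaIJ
    (R S M : Type*) [CommRing R] [IsNoetherianRing R] [Ring S] [Algebra R S]
    [AddCommGroup M] [Module S M] (I J : Ideal R) :
    RAssOf R (⊤ : Submodule S M) ∩ WIJ I J = RAssOf R (gammaIJ R S I J M) := by
  ext p
  constructor
  · rintro ⟨⟨L, -, hel, hann⟩, hp, n, hn, hpow⟩
    refine ⟨L, ?_, hel, hann⟩
    exact le_sSup ⟨hel.2.1, n, hn, by rw [hann]; exact hpow⟩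
  · rintro ⟨L, hLle, hel, hann⟩
    obtain ⟨hLne, hLfg, q, hq, hq'⟩ := hel
    have hpq : p = q := by rw [← hann, hq' L le_rfl hLne]
    refine ⟨⟨L, le_top, ⟨hLne, hLfg, q, hq, hq'⟩, hann⟩, hpq ▸ hq, ?_⟩
    -- L ≤ sSup of the set; L is FG hence compact
    have hcompact : IsCompactElement L :=
      (Submodule.fg_iff_compact L).mp hLfg
    obtain ⟨t, hts, hLt⟩ := (CompleteLattice.isCompactElement_iff_exists_le_sSup_of_le_sSup _ L).mp hcompact
      {N : Submodule S M | N.FG ∧ ∃ n, 1 ≤ n ∧ I ^ n ≤ annRS R N ⊔ J} hLle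
    obtain ⟨n, hn, hpow⟩ := finset_sup_bound I J t (fun N hN => (hts hN).2)
    refine ⟨n, hn, le_trans hpow (sup_le_sup_right ?_ J)⟩
    rw [← hann]
    exact annRS_antitone hLt
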